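/- Let X and Y be smooth manifolds of the same finite dimension, with X compact, and let f : X → Y be a C¹ map. Then the set of points y ∈ Y whose preimage f⁻¹(y) is infinite has measure zero in Y. -/

import Mathlib

open MeasureTheory Manifold

section Aux

variable {n : ℕ} {X Y : Type*}
    [TopologicalSpace X] [ChartedSpace (EuclideanSpace ℝ (Fin n)) X]
    [IsManifold (𝓡 n) (⊤ : ℕ∞) X]
    [TopologicalSpace Y] [ChartedSpace (EuclideanSpace ℝ (Fin n)) Y]
    [IsManifold (𝓡 n) (⊤ : ℕ∞) Y]

/-- A charted space over a T1 model is T1. -/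
lemma aux_t1Space {H Z : Type*} [TopologicalSpace H] [T1Space H] [TopologicalSpace Z]
    [ChartedSpace H Z] : T1Space Z := by
  refine t1Space_iff_exists_open.mpr fun x y hxy => ?_
  by_cases hy : y ∈ (chartAt H x).source
  · have hchart : chartAt H x x ≠ chartAt H x y := by
      intro h
      exact hxy ((chartAt H x).injOn (mem_chart_source H x) hy h)
    obtain ⟨U, hUopen, hxU, hyU⟩ := t1Space_iff_exists_open.mp ‹T1Space H› hchart
    refine ⟨(chartAt H x).source ∩ (chartAt H x) ⁻¹' U, ?_, ⟨mem_chart_source H x, hxU⟩, ?_⟩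
    · exact (chartAt H x).continuousOn.isOpen_inter_preimage (chartAt H x).open_source hUopen
    · rintro ⟨-, h2⟩; exact hyU h2
  · exact ⟨(chartAt H x).source, (chartAt H x).open_source, mem_chart_source H x, hy⟩

/-- The chart representation of `f` is `C¹` at interior points. -/
lemma aux_contDiffAt (f : X → Y) (hf : ContMDiff (𝓡 n) (𝓡 n) 1 f)
    (ψ : OpenPartialHomeomorph X (EuclideanSpace ℝ (Fin n)))
    (φ : OpenPartialHomeomorph Y (EuclideanSpace ℝ (Fin n)))
    (hψ : ψ ∈ atlas (EuclideanSpace ℝ (Fin n)) X)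
    (hφ : φ ∈ atlas (EuclideanSpace ℝ (Fin n)) Y)
    {x : X} (hx1 : x ∈ ψ.source) (hx2 : f x ∈ φ.source) :
    ContDiffAt ℝ 1 (φ ∘ f ∘ ψ.symm) (ψ x) := by
  have h1 : ContMDiffAt (𝓡 n) (𝓡 n) 1 ψ.symm (ψ x) := by
    refine ((contMDiffOn_symm_of_mem_maximalAtlas
      (IsManifold.subset_maximalAtlas hψ)) (ψ x)
      (ψ.map_source hx1)).contMDiffAt (ψ.open_target.mem_nhds (ψ.map_source hx1))
  have h2 : ContMDiffAt (𝓡 n) (𝓡 n) 1 f (ψ.symm (ψ x)) := by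
    rw [ψ.left_inv hx1]; exact hf x
  have h3 : ContMDiffAt (𝓡 n) (𝓡 n) 1 φ (f (ψ.symm (ψ x))) := by
    rw [ψ.left_inv hx1]
    exact ((contMDiffOn_of_mem_maximalAtlas
      (IsManifold.subset_maximalAtlas hφ)) (f x) hx2).contMDiffAt
      (φ.open_source.mem_nhds hx2)
  exact contMDiffAt_iff_contDiffAt.mp ((h3.comp _ h2).comp _ h1)

/-- If `f` is not injective on any neighborhood of `x`, then the Jacobian determinant of the
chart representation of `f` vanishes at `ψ x`. -/
lemma aux_det_zero (f : X → Y) (hf : ContMDiff (𝓡 n) (𝓡 n) 1 f)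
    (ψ : OpenPartialHomeomorph X (EuclideanSpace ℝ (Fin n)))
    (φ : OpenPartialHomeomorph Y (EuclideanSpace ℝ (Fin n)))
    (hψ : ψ ∈ atlas (EuclideanSpace ℝ (Fin n)) X)
    (hφ : φ ∈ atlas (EuclideanSpace ℝ (Fin n)) Y)
    {x : X} (hx1 : x ∈ ψ.source) (hx2 : f x ∈ φ.source)
    (hloc : ∀ U ∈ nhds x, ¬ Set.InjOn f U) :
    (fderiv ℝ (φ ∘ f ∘ ψ.symm) (ψ x)).det = 0 := by
  by_contra hdet
  set g := φ ∘ f ∘ ψ.symm with hg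
  have hgc : ContDiffAt ℝ 1 g (ψ x) := aux_contDiffAt f hf ψ φ hψ hφ hx1 hx2
  set D := fderiv ℝ g (ψ x) with hD
  set e := D.toContinuousLinearEquivOfDetNeZero hdet with he
  have hDe : (e : EuclideanSpace ℝ (Fin n) →L[ℝ] EuclideanSpace ℝ (Fin n)) = D :=
    D.coe_toContinuousLinearEquivOfDetNeZero hdet
  have hfd : HasFDerivAt g (e : EuclideanSpace ℝ (Fin n) →L[ℝ] EuclideanSpace ℝ (Fin n)) (ψ x) := by
    rw [hDe]
    exact (hgc.differentiableAt one_ne_zero).hasFDerivAt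
  set P := hgc.toOpenPartialHomeomorph g hfd one_ne_zero with hP
  have hPsrc : ψ x ∈ P.source := hgc.mem_toOpenPartialHomeomorph_source hfd one_ne_zero
  have hPcoe : (P : EuclideanSpace ℝ (Fin n) → EuclideanSpace ℝ (Fin n)) = g :=
    hgc.toOpenPartialHomeomorph_coe hfd one_ne_zero
  set U := ψ.source ∩ ψ ⁻¹' P.source ∩ f ⁻¹' φ.source with hU
  have hUnhds : U ∈ nhds x := by
    refine Filter.inter_mem (Filter.inter_mem (ψ.open_source.mem_nhds hx1) ?_) ?_
    · exact (ψ.continuousAt hx1).preimage_mem_nhds (P.open_source.mem_nhds hPsrc)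
    · exact (hf.continuous.continuousAt).preimage_mem_nhds (φ.open_source.mem_nhds hx2)
  refine hloc U hUnhds fun a ha b hb hab => ?_
  have hga : g (ψ a) = g (ψ b) := by
    simp only [hg, Function.comp_apply, ψ.left_inv ha.1.1, ψ.left_inv hb.1.1, hab]
  have : ψ a = ψ b := by
    apply P.injOn ha.1.2 hb.1.2
    rw [hPcoe]; exact hga
  exact ψ.injOn ha.1.1 hb.1.1 this

end Aux

/-- Let `X` and `Y` be smooth manifolds of the same finite dimension `n`,
with `X` compact, and `f : X → Y` a `C¹` map. Then the set of points `y ∈ Y` whose preimage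
`f ⁻¹' {y}` is infinite has measure zero in `Y`, in the sense that its image in every chart
of `Y` has Lebesgue measure zero. -/
theorem infinite_fiber_set_measure_zero
    (n : ℕ) {X Y : Type*}
    [TopologicalSpace X] [ChartedSpace (EuclideanSpace ℝ (Fin n)) X]
    [IsManifold (𝓡 n) (⊤ : ℕ∞) X] [CompactSpace X]
    [TopologicalSpace Y] [ChartedSpace (EuclideanSpace ℝ (Fin n)) Y]
    [IsManifold (𝓡 n) (⊤ : ℕ∞) Y]
    (f : X → Y) (hf : ContMDiff (𝓡 n) (𝓡 n) 1 f) :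
    ∀ φ ∈ atlas (EuclideanSpace ℝ (Fin n)) Y,
      volume (φ '' ({y : Y | (f ⁻¹' {y}).Infinite} ∩ φ.source)) = 0 := by
  intro φ hφ
  haveI : T1Space Y := aux_t1Space (H := EuclideanSpace ℝ (Fin n))
  set E := EuclideanSpace ℝ (Fin n)
  set S : Set Y := {y : Y | (f ⁻¹' {y}).Infinite} with hS
  set C : Set X := {x : X | ∀ U ∈ nhds x, ¬ Set.InjOn f U} with hC
  -- every point of S is the image of a point of C
  have hSC : ∀ y ∈ S, ∃ x ∈ C, f x = y := by
    intro y hy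
    obtain ⟨x, hx⟩ := Set.Infinite.exists_accPt_principal (hy : (f ⁻¹' {y}).Infinite)
    have hfx : f x = y := by
      have hxcl : x ∈ closure (f ⁻¹' {y}) :=
        mem_closure_iff_clusterPt.mpr hx.clusterPt
      have : IsClosed (f ⁻¹' {y}) := (isClosed_singleton).preimage hf.continuous
      exact this.closure_subset hxcl
    refine ⟨x, fun U hU hinj => ?_, hfx⟩
    obtain ⟨z, ⟨hzU, hz⟩, hzx⟩ := accPt_iff_nhds.mp hx U hU
    exact hzx (hinj hzU (mem_of_mem_nhds hU) (by rw [hz, hfx]))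
  -- finite chart cover of X
  obtain ⟨t, ht⟩ := isCompact_univ.elim_finite_subcover
    (fun x : X => (chartAt E x).source) (fun x => (chartAt E x).open_source)
    (fun x _ => Set.mem_iUnion.mpr ⟨x, mem_chart_source E x⟩)
  -- the image is covered by images of critical sets in charts
  have hcover : φ '' (S ∩ φ.source) ⊆
      ⋃ x₀ ∈ t, (φ ∘ f ∘ (chartAt E x₀).symm) ''
        ((chartAt E x₀) '' (C ∩ (chartAt E x₀).source ∩ f ⁻¹' φ.source)) := by
    rintro - ⟨y, ⟨hyS, hyφ⟩, rfl⟩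
    obtain ⟨x, hxC, hfx⟩ := hSC y hyS
    obtain ⟨x₀, hx₀t, hxsrc⟩ := by
      have := ht (Set.mem_univ x)
      simpa using this
    refine Set.mem_biUnion hx₀t ⟨chartAt E x₀ x, ⟨x, ⟨⟨hxC, hxsrc⟩, show f x ∈ φ.source by rw [hfx]; exact hyφ⟩, rfl⟩, ?_⟩
    simp only [Function.comp_apply, (chartAt E x₀).left_inv hxsrc, hfx]
  refine measure_mono_null hcover ?_
  refine (measure_biUnion_null_iff t.countable_toSet).mpr fun x₀ _ => ?_
  set ψ := chartAt E x₀ with hψdef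
  set s := ψ '' (C ∩ ψ.source ∩ f ⁻¹' φ.source) with hs
  refine addHaar_image_eq_zero_of_det_fderivWithin_eq_zero volume
    (f' := fun z => fderiv ℝ (φ ∘ f ∘ ψ.symm) z) ?_ ?_
  · rintro - ⟨x, ⟨⟨hxC, hx1⟩, hx2⟩, rfl⟩
    exact ((aux_contDiffAt f hf ψ φ (chart_mem_atlas E x₀) hφ hx1 hx2).differentiableAt
      one_ne_zero).hasFDerivAt.hasFDerivWithinAt
  · rintro - ⟨x, ⟨⟨hxC, hx1⟩, hx2⟩, rfl⟩
    exact aux_det_zero f hf ψ φ (chart_mem_atlas E x₀) hφ hx1 hx2 hxC
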